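/- Let Λ be a finite simple graph with vertices v_1, …, v_n and n ≥ 3, and let Γ(Λ) be the graph of the explicit construction. Then for every vertex v of Γ(Λ), the support graph of Γ(Λ) at v is a forest (contains no cycles). -/

import Mathlib

open SimpleGraph
open scoped commutatorElement

/-- The set of commutator relations defining the right-angled Artin group of a graph. -/
def raagRels {V : Type} (G : SimpleGraph V) : Set (FreeGroup V) :=
  {r | ∃ v w : V, G.Adj v w ∧ r = ⁅FreeGroup.of v, FreeGroup.of w⁆}

/-- The right-angled Artin group of a graph `G`. -/
abbrev RAAG {V : Type} (G : SimpleGraph V) : Type := PresentedGroup (raagRels G)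

/-- The subgroup of inner automorphisms of a group. -/
def Inn (G : Type*) [Group G] : Subgroup (MulAut G) := (MulAut.conj (G := G)).range

instance Inn.normal (G : Type*) [Group G] : (Inn G).Normal := by
  constructor
  intro x hx φ
  obtain ⟨g, rfl⟩ := hx
  refine ⟨φ g, ?_⟩
  ext h
  simp [MulAut.conj, mul_assoc]

/-- The outer automorphism group of a group. -/
abbrev Out (G : Type*) [Group G] : Type _ := MulAut G ⧸ Inn G

/-- The group of pure symmetric automorphisms of the right-angled Artin group of `G`:
those automorphisms sending each generator to a conjugate of itself. -/
def PSA {V : Type} (G : SimpleGraph V) : Subgroup (MulAut (RAAG G)) where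
  carrier := {φ | ∀ v : V,
    IsConj (PresentedGroup.of (rels := raagRels G) v) (φ (PresentedGroup.of v))}
  one_mem' := fun _ => IsConj.refl _
  mul_mem' := by
    intro φ ψ hφ hψ v
    rw [MulAut.mul_apply]
    exact (hφ v).trans (φ.toMonoidHom.map_isConj (hψ v))
  inv_mem' := by
    intro φ hφ v
    have h := (φ⁻¹ : MulAut (RAAG G)).toMonoidHom.map_isConj (hφ v)
    simp only [MulEquiv.coe_toMonoidHom] at h
    have h2 : (φ⁻¹ : MulAut (RAAG G)) (φ (PresentedGroup.of v)) = PresentedGroup.of v := by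
      simp
    rw [h2] at h
    exact h.symm

/-- The group of pure symmetric outer automorphisms: the image of `PSA` in `Out`. -/
def PSO {V : Type} (G : SimpleGraph V) : Subgroup (Out (RAAG G)) :=
  (PSA G).map (QuotientGroup.mk' (Inn (RAAG G)))

/-- The star of a vertex: the vertex together with its neighbours. -/
def graphStar {V : Type} (G : SimpleGraph V) (v : V) : Set V := insert v (G.neighborSet v)

/-- `IsCompOf G s A` says that `A` is the vertex set of a connected component of the
induced subgraph of `G` on `s`. -/
def IsCompOf {V : Type} (G : SimpleGraph V) (s : Set V) (A : Set V) : Prop :=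
  ∃ a : s, A = {x : V | ∃ hx : x ∈ s, (SimpleGraph.induce s G).Reachable ⟨x, hx⟩ a}

/-- The support graph of `G` at a vertex `v`: vertices are the connected components of
`G - st(v)`, and two distinct components `A`, `B` are adjacent if there is `b ∈ B` such
that `A` is also a connected component of `G - st(b)`, or symmetrically. -/
def SupportGraph {V : Type} (G : SimpleGraph V) (v : V) :
    SimpleGraph {A : Set V // IsCompOf G (graphStar G v)ᶜ A} :=
  SimpleGraph.fromRel (fun A B => ∃ b ∈ B.1, IsCompOf G (graphStar G b)ᶜ A.1)

/-- A pair of distinct non-adjacent vertices `(v, w)` is a separating intersection of links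
if `G - (lk(v) ∩ lk(w))` has a connected component containing neither `v` nor `w`. -/
def SILPair {V : Type} (G : SimpleGraph V) (v w : V) : Prop :=
  v ≠ w ∧ ¬ G.Adj v w ∧
    ∃ A : Set V, IsCompOf G (G.neighborSet v ∩ G.neighborSet w)ᶜ A ∧ v ∉ A ∧ w ∉ A
/-- Vertices of the graph `Γ(Λ)`: the vertices of `Λ` (indexed by `Fin n`, with `v i`
denoting `v_{i+1}`) together with new vertices `a₁, a₂, b₁, b₂, c₁, …, c_n, d₁, d₂`. -/
inductive GV (n : ℕ) : Type where
  | v (i : Fin n)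
  | a1 | a2 | b1 | b2
  | c (i : Fin n)
  | d1 | d2
deriving DecidableEq

/-- The edge relation of the graph `Γ(Λ)` (to be symmetrized by `SimpleGraph.fromRel`). -/
def gammaRel {n : ℕ} (Λ : SimpleGraph (Fin n)) : GV n → GV n → Prop
  | .v i, .v j => Λ.Adj i j
  | .c i, .v j => j = i ∨ (j : ℕ) = ((i : ℕ) + 1) % n
  | .c _, .d1 => True
  | .c _, .d2 => True
  | .d1, .v j => (j : ℕ) = 0
  | .d1, .b1 => True
  | .d2, .v j => (j : ℕ) ≠ 0
  | .d2, .b2 => True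
  | .v _, .b1 => True
  | .v _, .b2 => True
  | .b1, .a1 => True
  | .b2, .a2 => True
  | .a1, .a2 => True
  | _, _ => False

/-- The graph `Γ(Λ)` of the explicit construction. -/
def GammaGraph {n : ℕ} (Λ : SimpleGraph (Fin n)) : SimpleGraph (GV n) :=
  SimpleGraph.fromRel (gammaRel Λ)

/-- Vertices of the graph `Γ'(Λ)`: the vertices of `Λ` (indexed by `Fin n`, with `v i`
denoting `v_{i+1}`) together with new vertices
`a₁, a₂, a₃, b₁, b₂, b₃, c₁, …, c_n, d₁, d₂, d₃`. -/
inductive GV' (n : ℕ) : Type where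
  | v (i : Fin n)
  | a1 | a2 | a3 | b1 | b2 | b3
  | c (i : Fin n)
  | d1 | d2 | d3
deriving DecidableEq

/-- The edge relation of the graph `Γ'(Λ)` (to be symmetrized by `SimpleGraph.fromRel`). -/
def gammaRel' {n : ℕ} (Λ : SimpleGraph (Fin n)) : GV' n → GV' n → Prop
  | .v i, .v j => Λ.Adj i j
  | .c i, .v j => j = i ∨ (j : ℕ) = ((i : ℕ) + 1) % n
  | .c _, .d1 => True
  | .c _, .d2 => True
  | .c _, .d3 => True
  | .d1, .v j => (j : ℕ) = 0
  | .d1, .b1 => True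
  | .d2, .v j => (j : ℕ) = 1
  | .d3, .v j => 2 ≤ (j : ℕ)
  | .d3, .b3 => True
  | .d2, .d3 => True
  | .v _, .b1 => True
  | .v _, .b2 => True
  | .v _, .b3 => True
  | .b1, .a1 => True
  | .b2, .a2 => True
  | .b3, .a3 => True
  | .a1, .a2 => True
  | .a1, .a3 => True
  | .a2, .a3 => True
  | _, _ => False

/-- The graph `Γ'(Λ)` of the second explicit construction. -/
def GammaGraph' {n : ℕ} (Λ : SimpleGraph (Fin n)) : SimpleGraph (GV' n) :=
  SimpleGraph.fromRel (gammaRel' Λ)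


-- Auxiliary definitions and lemmas
section
variable {n : ℕ} (Λ : SimpleGraph (Fin n))

def S (v : GV n) : Set (GV n) := (graphStar (GammaGraph Λ) v)ᶜ

lemma mem_S_iff {v x : GV n} :
    x ∈ S Λ v ↔ x ≠ v ∧ ¬ gammaRel Λ v x ∧ ¬ gammaRel Λ x v := by
  simp only [S, graphStar, Set.mem_compl_iff, Set.mem_insert_iff, SimpleGraph.mem_neighborSet,
    GammaGraph, SimpleGraph.fromRel_adj, not_or, not_and, ne_eq]
  constructor
  · rintro ⟨h1, h2⟩
    exact ⟨fun h => h1 h, h2 (fun he => h1 he.symm)⟩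
  · rintro ⟨h1, h2, h3⟩
    exact ⟨fun h => h1 h, fun _ => ⟨h2, h3⟩⟩

lemma reach_step {v : GV n} {x y : GV n} (hx : x ∈ S Λ v) (hy : y ∈ S Λ v)
    (hne : x ≠ y) (h : gammaRel Λ x y ∨ gammaRel Λ y x) :
    (SimpleGraph.induce (S Λ v) (GammaGraph Λ)).Reachable ⟨x, hx⟩ ⟨y, hy⟩ := by
  refine SimpleGraph.Adj.reachable ?_
  show (GammaGraph Λ).Adj x y
  exact (SimpleGraph.fromRel_adj _ _ _).mpr ⟨hne, h⟩
end

def cls {n : ℕ} : GV n → Bool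
  | .a1 => true
  | .a2 => true
  | _ => false

lemma mod_facts {n : ℕ} (hn : 3 ≤ n) {i : ℕ} (hi : i < n) :
    (i + 2) % n ≠ i ∧ (i + 2) % n ≠ (i + 1) % n := by
  rcases Nat.lt_or_ge (i + 2) n with h | h
  · rw [Nat.mod_eq_of_lt h, Nat.mod_eq_of_lt (by omega)]
    omega
  · have h2 : i + 2 - n < n := by omega
    rw [Nat.mod_eq_sub_mod h, Nat.mod_eq_of_lt h2]
    rcases Nat.lt_or_ge (i + 1) n with h3 | h3
    · rw [Nat.mod_eq_of_lt h3]; omega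
    · have h4 : i + 1 = n := by omega
      rw [h4, Nat.mod_self]; omega

section
variable {n : ℕ} (Λ : SimpleGraph (Fin n))

lemma reach_hub (hn : 3 ≤ n) (v : GV n) :
    ∃ h, ∃ hh : h ∈ S Λ v, ∀ x (hx : x ∈ S Λ v), cls x = false →
      (SimpleGraph.induce (S Λ v) (GammaGraph Λ)).Reachable ⟨x, hx⟩ ⟨h, hh⟩ := by
  have hn0 : 0 < n := by omega
  set i0 : Fin n := ⟨0, hn0⟩ with hi0def
  cases v with
  | a1 =>
    have hd2 : (GV.d2 : GV n) ∈ S Λ .a1 := by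
      rw [mem_S_iff]; refine ⟨by simp, by simp [gammaRel], by simp [gammaRel]⟩
    refine ⟨_, hd2, ?_⟩
    rintro x hx hcls
    cases x with
    | v j =>
      have hc : (GV.c j) ∈ S Λ .a1 := by
        rw [mem_S_iff]; refine ⟨by simp, by simp [gammaRel], by simp [gammaRel]⟩
      exact (reach_step Λ hx hc (by simp) (Or.inr (Or.inl rfl))).trans
        (reach_step Λ hc hd2 (by simp) (Or.inl trivial))
    | c j => exact reach_step Λ hx hd2 (by simp) (Or.inl trivial)
    | b2 => exact reach_step Λ hx hd2 (by simp) (Or.inr trivial)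
    | d1 =>
      have hc : (GV.c i0) ∈ S Λ .a1 := by
        rw [mem_S_iff]; refine ⟨by simp, by simp [gammaRel], by simp [gammaRel]⟩
      exact (reach_step Λ hx hc (by simp) (Or.inr trivial)).trans
        (reach_step Λ hc hd2 (by simp) (Or.inl trivial))
    | d2 => exact SimpleGraph.Reachable.refl _
    | a1 => simp [cls] at hcls
    | a2 => simp [cls] at hcls
    | b1 => rw [mem_S_iff] at hx; exact absurd trivial hx.2.2
  | a2 =>
    have hd2 : (GV.d2 : GV n) ∈ S Λ .a2 := by
      rw [mem_S_iff]; refine ⟨by simp, by simp [gammaRel], by simp [gammaRel]⟩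
    have hc0 : (GV.c i0) ∈ S Λ .a2 := by
      rw [mem_S_iff]; refine ⟨by simp, by simp [gammaRel], by simp [gammaRel]⟩
    have hd1 : (GV.d1 : GV n) ∈ S Λ .a2 := by
      rw [mem_S_iff]; refine ⟨by simp, by simp [gammaRel], by simp [gammaRel]⟩
    refine ⟨_, hd2, ?_⟩
    rintro x hx hcls
    cases x with
    | v j =>
      have hc : (GV.c j) ∈ S Λ .a2 := by
        rw [mem_S_iff]; refine ⟨by simp, by simp [gammaRel], by simp [gammaRel]⟩
      exact (reach_step Λ hx hc (by simp) (Or.inr (Or.inl rfl))).trans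
        (reach_step Λ hc hd2 (by simp) (Or.inl trivial))
    | c j => exact reach_step Λ hx hd2 (by simp) (Or.inl trivial)
    | b1 =>
      exact ((reach_step Λ hx hd1 (by simp) (Or.inr trivial)).trans
        (reach_step Λ hd1 hc0 (by simp) (Or.inr trivial))).trans
        (reach_step Λ hc0 hd2 (by simp) (Or.inl trivial))
    | d1 =>
      exact (reach_step Λ hx hc0 (by simp) (Or.inr trivial)).trans
        (reach_step Λ hc0 hd2 (by simp) (Or.inl trivial))
    | d2 => exact SimpleGraph.Reachable.refl _
    | a2 => simp [cls] at hcls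
    | a1 => simp [cls] at hcls
    | b2 => rw [mem_S_iff] at hx; exact absurd trivial hx.2.2
  | b1 =>
    have hd2 : (GV.d2 : GV n) ∈ S Λ .b1 := by
      rw [mem_S_iff]; refine ⟨by simp, by simp [gammaRel], by simp [gammaRel]⟩
    refine ⟨_, hd2, ?_⟩
    rintro x hx hcls
    cases x with
    | c j => exact reach_step Λ hx hd2 (by simp) (Or.inl trivial)
    | b2 => exact reach_step Λ hx hd2 (by simp) (Or.inr trivial)
    | a2 => simp [cls] at hcls
    | d2 => exact SimpleGraph.Reachable.refl _
    | b1 => rw [mem_S_iff] at hx; exact absurd rfl hx.1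
    | a1 => simp [cls] at hcls
    | d1 => rw [mem_S_iff] at hx; exact absurd trivial hx.2.2
    | v j => rw [mem_S_iff] at hx; exact absurd trivial hx.2.2
  | b2 =>
    have hd1 : (GV.d1 : GV n) ∈ S Λ .b2 := by
      rw [mem_S_iff]; refine ⟨by simp, by simp [gammaRel], by simp [gammaRel]⟩
    refine ⟨_, hd1, ?_⟩
    rintro x hx hcls
    cases x with
    | c j => exact reach_step Λ hx hd1 (by simp) (Or.inl trivial)
    | b1 => exact reach_step Λ hx hd1 (by simp) (Or.inr trivial)
    | a1 => simp [cls] at hcls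
    | d1 => exact SimpleGraph.Reachable.refl _
    | b2 => rw [mem_S_iff] at hx; exact absurd rfl hx.1
    | a2 => simp [cls] at hcls
    | d2 => rw [mem_S_iff] at hx; exact absurd trivial hx.2.2
    | v j => rw [mem_S_iff] at hx; exact absurd trivial hx.2.2
  | d1 =>
    have hd2 : (GV.d2 : GV n) ∈ S Λ .d1 := by
      rw [mem_S_iff]; refine ⟨by simp, by simp [gammaRel], by simp [gammaRel]⟩
    refine ⟨_, hd2, ?_⟩
    rintro x hx hcls
    cases x with
    | v j =>
      have hx' := (mem_S_iff Λ).mp hx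
      have hj : (j : ℕ) ≠ 0 := by
        intro h; exact hx'.2.1 (by simpa [gammaRel] using h)
      exact reach_step Λ hx hd2 (by simp) (Or.inr hj)
    | b2 => exact reach_step Λ hx hd2 (by simp) (Or.inr trivial)
    | d2 => exact SimpleGraph.Reachable.refl _
    | d1 => rw [mem_S_iff] at hx; exact absurd rfl hx.1
    | c j => rw [mem_S_iff] at hx; exact absurd trivial hx.2.2
    | b1 => rw [mem_S_iff] at hx; exact absurd trivial hx.2.1
    | a1 => simp [cls] at hcls
    | a2 => simp [cls] at hcls
  | d2 =>
    have hb1 : (GV.b1 : GV n) ∈ S Λ .d2 := by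
      rw [mem_S_iff]; refine ⟨by simp, by simp [gammaRel], by simp [gammaRel]⟩
    refine ⟨_, hb1, ?_⟩
    rintro x hx hcls
    cases x with
    | v j => exact reach_step Λ hx hb1 (by simp) (Or.inl trivial)
    | d1 => exact reach_step Λ hx hb1 (by simp) (Or.inl trivial)
    | b1 => exact SimpleGraph.Reachable.refl _
    | d2 => rw [mem_S_iff] at hx; exact absurd rfl hx.1
    | c j => rw [mem_S_iff] at hx; exact absurd trivial hx.2.2
    | b2 => rw [mem_S_iff] at hx; exact absurd trivial hx.2.1
    | a1 => simp [cls] at hcls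
    | a2 => simp [cls] at hcls
  | c i =>
    obtain ⟨f2, f3⟩ := mod_facts hn i.isLt
    have hb1 : (GV.b1 : GV n) ∈ S Λ (.c i) := by
      rw [mem_S_iff]; refine ⟨by simp, by simp [gammaRel], by simp [gammaRel]⟩
    set k2 : Fin n := ⟨((i : ℕ) + 2) % n, Nat.mod_lt _ hn0⟩ with hk2def
    have hvk2 : (GV.v k2) ∈ S Λ (.c i) := by
      rw [mem_S_iff]
      refine ⟨by simp, ?_, by simp [gammaRel]⟩
      simp only [gammaRel, not_or]
      exact ⟨fun h => f2 (congrArg Fin.val h), f3⟩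
    refine ⟨_, hb1, ?_⟩
    rintro x hx hcls
    cases x with
    | v j => exact reach_step Λ hx hb1 (by simp) (Or.inl trivial)
    | b1 => exact SimpleGraph.Reachable.refl _
    | b2 =>
      exact (reach_step Λ hx hvk2 (by simp) (Or.inr trivial)).trans
        (reach_step Λ hvk2 hb1 (by simp) (Or.inl trivial))
    | c j =>
      have hx' := (mem_S_iff Λ).mp hx
      have hji : j ≠ i := fun h => hx'.1 (by rw [h])
      by_cases hj : (j : ℕ) = ((i : ℕ) + 1) % n
      · have hm : ((j : ℕ) + 1) % n = ((i : ℕ) + 2) % n := by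
          rw [hj, Nat.mod_add_mod]
        have hadj : gammaRel Λ (.c j) (.v k2) := by
          simp only [gammaRel]
          exact Or.inr hm.symm
        exact (reach_step Λ hx hvk2 (by simp) (Or.inl hadj)).trans
          (reach_step Λ hvk2 hb1 (by simp) (Or.inl trivial))
      · have hvj : (GV.v j) ∈ S Λ (.c i) := by
          rw [mem_S_iff]
          refine ⟨by simp, ?_, by simp [gammaRel]⟩
          simp only [gammaRel, not_or]
          exact ⟨hji, hj⟩
        exact (reach_step Λ hx hvj (by simp) (Or.inl (Or.inl rfl))).trans
          (reach_step Λ hvj hb1 (by simp) (Or.inl trivial))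
    | a1 => simp [cls] at hcls
    | a2 => simp [cls] at hcls
    | d1 => rw [mem_S_iff] at hx; exact absurd trivial hx.2.1
    | d2 => rw [mem_S_iff] at hx; exact absurd trivial hx.2.1
  | v i =>
    by_cases hiz : (i : ℕ) = 0
    · have hd2 : (GV.d2 : GV n) ∈ S Λ (.v i) := by
        rw [mem_S_iff]
        refine ⟨by simp, by simp [gammaRel], ?_⟩
        simp only [gammaRel, ne_eq, not_not]
        exact hiz
      refine ⟨_, hd2, ?_⟩
      rintro x hx hcls
      cases x with
      | v j =>
        have hx' := (mem_S_iff Λ).mp hx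
        have hj : (j : ℕ) ≠ 0 := by
          intro h
          exact hx'.1 (by
            congr 1
            exact Fin.ext (by rw [h, hiz]))
        exact reach_step Λ hx hd2 (by simp) (Or.inr hj)
      | c j => exact reach_step Λ hx hd2 (by simp) (Or.inl trivial)
      | d2 => exact SimpleGraph.Reachable.refl _
      | d1 => rw [mem_S_iff] at hx; exact absurd hiz hx.2.2
      | b1 => rw [mem_S_iff] at hx; exact absurd trivial hx.2.1
      | b2 => rw [mem_S_iff] at hx; exact absurd trivial hx.2.1
      | a1 => simp [cls] at hcls
      | a2 => simp [cls] at hcls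
    · have hd1 : (GV.d1 : GV n) ∈ S Λ (.v i) := by
        rw [mem_S_iff]
        refine ⟨by simp, by simp [gammaRel], ?_⟩
        simp only [gammaRel]
        exact hiz
      refine ⟨_, hd1, ?_⟩
      rintro x hx hcls
      cases x with
      | c j => exact reach_step Λ hx hd1 (by simp) (Or.inl trivial)
      | d1 => exact SimpleGraph.Reachable.refl _
      | d2 => rw [mem_S_iff] at hx; exact absurd hiz hx.2.2
      | b1 => rw [mem_S_iff] at hx; exact absurd trivial hx.2.1
      | b2 => rw [mem_S_iff] at hx; exact absurd trivial hx.2.1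
      | a1 => simp [cls] at hcls
      | a2 => simp [cls] at hcls
      | v j =>
        have hx' := (mem_S_iff Λ).mp hx
        have hji : (j : ℕ) ≠ (i : ℕ) := fun h => hx'.1 (by rw [Fin.ext h])
        by_cases hji1 : ((j : ℕ) + 1) % n = (i : ℕ)
        · set k : Fin n := ⟨((j : ℕ) + (n - 1)) % n, Nat.mod_lt _ hn0⟩ with hkdef
          have hk1 : ((k : ℕ) + 1) % n = (j : ℕ) := by
            show (((j : ℕ) + (n - 1)) % n + 1) % n = (j : ℕ)
            rw [Nat.mod_add_mod]
            have : (j : ℕ) + (n - 1) + 1 = (j : ℕ) + n := by omega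
            rw [this, Nat.add_mod_right, Nat.mod_eq_of_lt j.isLt]
          have hki : (k : ℕ) ≠ (i : ℕ) := by
            intro h
            apply (mod_facts hn i.isLt).1
            have hj' : ((i : ℕ) + 1) % n = (j : ℕ) := by rw [← h]; exact hk1
            calc ((i : ℕ) + 2) % n = (((i : ℕ) + 1) % n + 1) % n := by
                  rw [Nat.mod_add_mod]
              _ = (i : ℕ) := by rw [hj', hji1]
          have hck : (GV.c k) ∈ S Λ (.v i) := by
            rw [mem_S_iff]
            refine ⟨by simp, by simp [gammaRel], ?_⟩
            simp only [gammaRel, not_or]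
            constructor
            · intro h; exact hki (congrArg Fin.val h).symm
            · rw [hk1]; exact fun h => hji h.symm
          exact (reach_step Λ hx hck (by simp)
              (Or.inr (Or.inr hk1.symm))).trans
            (reach_step Λ hck hd1 (by simp) (Or.inl trivial))
        · have hcj : (GV.c j) ∈ S Λ (.v i) := by
            rw [mem_S_iff]
            refine ⟨by simp, by simp [gammaRel], ?_⟩
            simp only [gammaRel, not_or]
            constructor
            · intro h; exact hji (congrArg Fin.val h).symm
            · exact fun h => hji1 h.symm
          exact (reach_step Λ hx hcj (by simp) (Or.inr (Or.inl rfl))).trans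
            (reach_step Λ hcj hd1 (by simp) (Or.inl trivial))
end

section
variable {n : ℕ} (Λ : SimpleGraph (Fin n))

lemma key_reach (hn : 3 ≤ n) (v : GV n) (x y : GV n) (hx : x ∈ S Λ v) (hy : y ∈ S Λ v)
    (h : cls x = cls y) :
    (SimpleGraph.induce (S Λ v) (GammaGraph Λ)).Reachable ⟨x, hx⟩ ⟨y, hy⟩ := by
  by_cases hc : cls x = true
  · have hx2 : x = .a1 ∨ x = .a2 := by cases x <;> simp_all [cls]
    have hy2 : y = .a1 ∨ y = .a2 := by cases y <;> simp_all [cls]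
    rcases hx2 with rfl | rfl <;> rcases hy2 with rfl | rfl
    · exact SimpleGraph.Reachable.refl _
    · exact reach_step Λ hx hy (by simp) (Or.inl trivial)
    · exact reach_step Λ hx hy (by simp) (Or.inr trivial)
    · exact SimpleGraph.Reachable.refl _
  · rw [Bool.not_eq_true] at hc
    obtain ⟨hub, hh, hr⟩ := reach_hub Λ hn v
    exact (hr x hx hc).trans (hr y hy (h ▸ hc)).symm

lemma comp_eq {v : GV n} {a b : ↥(S Λ v)}
    (h : (SimpleGraph.induce (S Λ v) (GammaGraph Λ)).Reachable a b) :
    {x : GV n | ∃ hx : x ∈ S Λ v,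
        (SimpleGraph.induce (S Λ v) (GammaGraph Λ)).Reachable ⟨x, hx⟩ a}
      = {x : GV n | ∃ hx : x ∈ S Λ v,
        (SimpleGraph.induce (S Λ v) (GammaGraph Λ)).Reachable ⟨x, hx⟩ b} := by
  ext x
  exact ⟨fun ⟨hx, r⟩ => ⟨hx, r.trans h⟩, fun ⟨hx, r⟩ => ⟨hx, r.trans h.symm⟩⟩

end

theorem isAcyclic_of_two' {V : Type} {G : SimpleGraph V}
    (h : ∀ a b c : V, a = b ∨ a = c ∨ b = c) : G.IsAcyclic := by
  intro u p hp
  cases p with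
  | nil => exact hp.ne_nil rfl
  | cons h1 q =>
    cases q with
    | nil => exact G.loopless.irrefl u h1
    | @cons _ w _ h2 r =>
      rename_i v
      have hnodup := hp.isCircuit.isTrail.edges_nodup
      simp only [SimpleGraph.Walk.edges_cons, List.nodup_cons, List.mem_cons] at hnodup
      have huw : u ≠ w := by
        intro he; subst he
        exact hnodup.1 (Or.inl Sym2.eq_swap)
      rcases h u v w with he | he | he
      · exact h1.ne he
      · exact huw he
      · exact h2.ne he

theorem gammaGraph_support_graphs_forests'
    (n : ℕ) (hn : 3 ≤ n) (Λ : SimpleGraph (Fin n)) :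
    ∀ v : GV n, (SupportGraph (GammaGraph Λ) v).IsAcyclic := by
  intro v
  apply isAcyclic_of_two'
  rintro ⟨A, a, rfl⟩ ⟨B, b, rfl⟩ ⟨C, c, rfl⟩
  have hpig : cls a.1 = cls b.1 ∨ cls a.1 = cls c.1 ∨ cls b.1 = cls c.1 := by
    cases cls a.1 <;> cases cls b.1 <;> cases cls c.1 <;> simp
  rcases hpig with hp | hp | hp
  · exact Or.inl (Subtype.ext (comp_eq Λ (key_reach Λ hn v a.1 b.1 a.2 b.2 hp)))
  · exact Or.inr (Or.inl (Subtype.ext (comp_eq Λ (key_reach Λ hn v a.1 c.1 a.2 c.2 hp))))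
  · exact Or.inr (Or.inr (Subtype.ext (comp_eq Λ (key_reach Λ hn v b.1 c.1 b.2 c.2 hp))))

/-- For `Λ` with `n ≥ 3` vertices, every support graph of `Γ(Λ)` is a
forest. -/
theorem gammaGraph_support_graphs_forests
    (n : ℕ) (hn : 3 ≤ n) (Λ : SimpleGraph (Fin n)) :
    ∀ v : GV n, (SupportGraph (GammaGraph Λ) v).IsAcyclic :=
  gammaGraph_support_graphs_forests' n hn Λ
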